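/- arXiv:2412.19271 — 2 statements merged into one kernel-verified Lean document; each statement's English description precedes it below -/
import Mathlib

section
/- Let T be an invertible bounded selfadjoint operator on a real Hilbert space H and set |T| = sqrt(T²). For s ∈ [0,1] define T_s = T|T|⁻¹((1-s)|T| + s·I). Then each T_s is invertible and selfadjoint, T₀ = T, and T₁ = T|T|⁻¹ is an orthogonal selfadjoint operator (a symmetry). -/
open ContinuousLinearMap

private lemma exists_inverse_of_coercive {H : Type*} [NormedAddCommGroup H]
    [InnerProductSpace ℝ H] [CompleteSpace H] (A : H →L[ℝ] H) (c : ℝ) (hc : 0 < c)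
    (h : ∀ x : H, c * ‖x‖ * ‖x‖ ≤ inner (A x) x (𝕜 := ℝ)) :
    ∃ S : H →L[ℝ] H, A ∘L S = 1 ∧ S ∘L A = 1 := by
  have hB : IsCoercive ((innerSL ℝ).comp A) := ⟨c, hc, fun u => by simpa using h u⟩
  set e := hB.continuousLinearEquivOfBilin with he
  have key : ∀ v : H, e v = A v := by
    intro v
    apply ext_inner_right ℝ
    intro w
    have := hB.continuousLinearEquivOfBilin_apply v w
    rw [← he] at this
    simpa using this
  refine ⟨e.symm.toContinuousLinearMap, ?_, ?_⟩
  · ext x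
    have : A (e.symm x) = e (e.symm x) := (key _).symm
    simpa [this] using e.apply_symm_apply x
  · ext x
    have : A x = e x := (key _).symm
    simpa [this] using e.symm_apply_apply x

/-- Let `T` be an invertible bounded selfadjoint operator on a real Hilbert space and
`R = |T|` the positive square root of `T²`, which is invertible (with inverse `R'`) and
commutes with `T`. For `s ∈ [0,1]` set `T_s = T R⁻¹ ((1-s)R + sI)`. Then each `T_s` is
invertible and selfadjoint, `T₀ = T`, and `T₁ = T R⁻¹` is an orthogonal selfadjoint
operator, i.e. a symmetry. -/
theorem stmt_5 {H : Type*} [NormedAddCommGroup H] [InnerProductSpace ℝ H]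
    [CompleteSpace H] (T T' R R' : H →L[ℝ] H)
    (hTsa : ContinuousLinearMap.adjoint T = T)
    (hTinv : T ∘L T' = 1 ∧ T' ∘L T = 1)
    (hRsa : ContinuousLinearMap.adjoint R = R)
    (hRpos : ∀ x : H, 0 ≤ inner (R x) x (𝕜 := ℝ))
    (hRsq : R ∘L R = T ∘L T)
    (hRcomm : R ∘L T = T ∘L R)
    (hRinv : R ∘L R' = 1 ∧ R' ∘L R = 1) :
    (∀ s ∈ Set.Icc (0 : ℝ) 1,
        (∃ S : H →L[ℝ] H,
            (T ∘L R' ∘L ((1 - s) • R + s • 1)) ∘L S = 1 ∧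
            S ∘L (T ∘L R' ∘L ((1 - s) • R + s • 1)) = 1) ∧
        ContinuousLinearMap.adjoint (T ∘L R' ∘L ((1 - s) • R + s • 1)) =
          T ∘L R' ∘L ((1 - s) • R + s • 1)) ∧
    T ∘L R' ∘L ((1 - (0 : ℝ)) • R + (0 : ℝ) • 1) = T ∧
    ContinuousLinearMap.adjoint (T ∘L R') = T ∘L R' ∧
    ContinuousLinearMap.adjoint (T ∘L R') ∘L (T ∘L R') = 1 ∧
    (T ∘L R') ∘L (T ∘L R') = 1 := by
  obtain ⟨hTT', hT'T⟩ := hTinv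
  obtain ⟨hRR', hR'R⟩ := hRinv
  -- multiplicative forms
  have mRT : R * T = T * R := hRcomm
  have mRR' : R * R' = 1 := hRR'
  have mR'R : R' * R = 1 := hR'R
  have mTT' : T * T' = 1 := hTT'
  have mT'T : T' * T = 1 := hT'T
  have msq : R * R = T * T := hRsq
  have hsT : star T = T := by rw [star_eq_adjoint, hTsa]
  have hsR : star R = R := by rw [star_eq_adjoint, hRsa]
  -- R' commutes with T
  have hR'T : R' * T = T * R' := by
    calc R' * T = R' * T * (R * R') := by rw [mRR', mul_one]
      _ = R' * (T * R) * R' := by noncomm_ring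
      _ = R' * (R * T) * R' := by rw [mRT]
      _ = (R' * R) * (T * R') := by noncomm_ring
      _ = T * R' := by rw [mR'R, one_mul]
  -- star R' = R'
  have hsR' : star R' = R' := by
    have h1 : star R' * R = 1 := by
      rw [← hsR, ← star_mul, mRR', star_one]
    calc star R' = star R' * (R * R') := by rw [mRR', mul_one]
      _ = (star R' * R) * R' := by noncomm_ring
      _ = R' := by rw [h1, one_mul]
  -- pointwise facts
  have pRR' : ∀ y : H, R (R' y) = y := fun y => congrFun (congrArg DFunLike.coe hRR') y
  have pR'R : ∀ y : H, R' (R y) = y := fun y => congrFun (congrArg DFunLike.coe hR'R) y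
  have pTT' : ∀ y : H, T (T' y) = y := fun y => congrFun (congrArg DFunLike.coe hTT') y
  have pT'T : ∀ y : H, T' (T y) = y := fun y => congrFun (congrArg DFunLike.coe hT'T) y
  refine ⟨?_, ?_, ?_, ?_, ?_⟩
  · -- the family T_s
    rintro s ⟨hs0, hs1⟩
    set M : H →L[ℝ] H := (1 - s) • R + s • 1 with hM
    -- commutations with M
    have pRT : ∀ y : H, R (T y) = T (R y) := fun y => congrFun (congrArg DFunLike.coe hRcomm) y
    have hTM : T * M = M * T := by
      ext x
      show T (M x) = M (T x)
      simp [hM, pRT]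
    have hMR' : M * R' = R' * M := by
      ext x
      show M (R' x) = R' (M x)
      simp [hM, pRR', pR'R]
    have hsM : star M = M := by
      rw [hM]
      simp [star_smul, hsR]
    constructor
    · -- invertibility
      have hMinv : ∃ Q : H →L[ℝ] H, M ∘L Q = 1 ∧ Q ∘L M = 1 := by
        rcases eq_or_lt_of_le hs0 with h0 | hpos
        · refine ⟨R', ?_, ?_⟩ <;>
            simp [hM, ← h0, hRR', hR'R]
        · refine exists_inverse_of_coercive M s hpos ?_
          intro x
          have h1 := hRpos x
          have h2 : inner (M x) x (𝕜 := ℝ)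
              = (1 - s) * (inner (R x) x (𝕜 := ℝ)) + s * (‖x‖ * ‖x‖) := by
            simp [hM, inner_add_left, real_inner_smul_left,
              real_inner_self_eq_norm_mul_norm, sq]
          rw [h2]
          nlinarith [mul_nonneg (by linarith : (0:ℝ) ≤ 1 - s) h1]
      obtain ⟨Q, hQ1, hQ2⟩ := hMinv
      have pQ1 : ∀ y : H, M (Q y) = y := fun y => congrFun (congrArg DFunLike.coe hQ1) y
      have pQ2 : ∀ y : H, Q (M y) = y := fun y => congrFun (congrArg DFunLike.coe hQ2) y
      refine ⟨Q ∘L R ∘L T', ?_, ?_⟩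
      · ext x
        simp [ContinuousLinearMap.comp_apply, ← hM, pQ1, pR'R, pTT']
      · ext x
        simp [ContinuousLinearMap.comp_apply, ← hM, pT'T, pRR', pQ2]
    · -- selfadjointness
      rw [← star_eq_adjoint]
      show star (T * (R' * M)) = T * (R' * M)
      rw [star_mul, star_mul, hsM, hsR', hsT]
      calc M * R' * T = R' * M * T := by rw [hMR']
        _ = R' * (M * T) := by rw [mul_assoc]
        _ = R' * (T * M) := by rw [← hTM]
        _ = (R' * T) * M := by rw [mul_assoc]
        _ = (T * R') * M := by rw [hR'T]
        _ = T * (R' * M) := by rw [mul_assoc]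
  · -- T₀ = T
    ext x
    simp [pR'R]
  · -- adjoint (T R') = T R'
    rw [← star_eq_adjoint]
    show star (T * R') = T * R'
    rw [star_mul, hsR', hsT, hR'T]
  · -- adjoint (T R') ∘ (T R') = 1
    have h3 : ContinuousLinearMap.adjoint (T ∘L R') = T ∘L R' := by
      rw [← star_eq_adjoint]
      show star (T * R') = T * R'
      rw [star_mul, hsR', hsT, hR'T]
    rw [h3]
    show (T * R') * (T * R') = 1
    calc (T * R') * (T * R') = T * (R' * T) * R' := by noncomm_ring
      _ = T * (T * R') * R' := by rw [hR'T]
      _ = (T * T) * (R' * R') := by noncomm_ring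
      _ = (R * R) * (R' * R') := by rw [msq]
      _ = R * (R * R') * R' := by noncomm_ring
      _ = 1 := by rw [mRR', mul_one, mRR']
  · show (T * R') * (T * R') = 1
    calc (T * R') * (T * R') = T * (R' * T) * R' := by noncomm_ring
      _ = T * (T * R') * R' := by rw [hR'T]
      _ = (T * T) * (R' * R') := by noncomm_ring
      _ = (R * R) * (R' * R') := by rw [msq]
      _ = R * (R * R') * R' := by noncomm_ring
      _ = 1 := by rw [mRR', mul_one, mRR']
end

section
/- Let H be a Hilbert space, L : ℝ → L(H) a continuous family of bounded operators, T : ℝ → GL(H) continuous, K : ℝ → K(H) a continuous family of compact operators with T_λ L_λ = I + K_λ, and C : ℝ × H → H a compact (completely continuous) map. Then the map F(λ,x) = L_λ x + C(λ,x) is proper on every closed bounded subset of ℝ × H. -/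
open ContinuousLinearMap Bornology Pointwise

/-- A continuous family of compact operators maps `I × closedBall 0 R` (with `I` compact)
to a totally bounded set. -/
lemma aux_totB {H : Type*} [NormedAddCommGroup H] [InnerProductSpace ℝ H]
    (K : ℝ → H →L[ℝ] H) (hK : Continuous K) (hKcpt : ∀ l : ℝ, IsCompactOperator (K l))
    {I : Set ℝ} (hI : IsCompact I) (R : ℝ) :
    TotallyBounded ((fun p : ℝ × H => K p.1 p.2) '' (I ×ˢ Metric.closedBall 0 R)) := by
  rw [Metric.totallyBounded_iff]
  intro ε hε
  set R' : ℝ := |R| + 1 with hR'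
  have hR'pos : 0 < R' := by positivity
  have hr : 0 < ε / (2 * R') := by positivity
  obtain ⟨t, htI, hcov⟩ := hI.elim_nhds_subcover
    (fun j => {l | ‖K l - K j‖ < ε / (2 * R')}) (fun j hj => by
      have hc : Continuous fun l => ‖K l - K j‖ := (hK.sub continuous_const).norm
      have ho : IsOpen {l | ‖K l - K j‖ < ε / (2 * R')} :=
        isOpen_lt hc continuous_const
      exact ho.mem_nhds (by simpa using hr))
  have hnet : ∀ j : ℝ, ∃ s : Set H, s.Finite ∧
      (K j) '' Metric.closedBall 0 R ⊆ ⋃ y ∈ s, Metric.ball y (ε / 2) := by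
    intro j
    have hcpt : IsCompact (closure ((K j) '' Metric.closedBall 0 R)) :=
      (hKcpt j).isCompact_closure_image_closedBall R
    have htb := hcpt.totallyBounded
    rw [Metric.totallyBounded_iff] at htb
    obtain ⟨s, hs, hsub⟩ := htb (ε / 2) (by positivity)
    exact ⟨s, hs, subset_closure.trans hsub⟩
  choose net hnetfin hnetsub using hnet
  refine ⟨⋃ j ∈ t, net j, t.finite_toSet.biUnion fun j _ => hnetfin j, ?_⟩
  rintro _ ⟨⟨l, x⟩, ⟨hl, hx⟩, rfl⟩
  obtain ⟨j, hjt, hj⟩ : ∃ j ∈ t, ‖K l - K j‖ < ε / (2 * R') := by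
    simpa using hcov hl
  obtain ⟨y, hy, hdy⟩ : ∃ y ∈ net j, K j x ∈ Metric.ball y (ε / 2) := by
    simpa using hnetsub j ⟨x, hx, rfl⟩
  have hxR : ‖x‖ ≤ R' := by
    have := Metric.mem_closedBall.1 hx
    rw [dist_zero_right] at this
    calc ‖x‖ ≤ R := this
      _ ≤ |R| := le_abs_self R
      _ ≤ R' := by simp [hR']
  have hdiff : ‖K l x - K j x‖ ≤ ε / 2 := by
    have h1 : ‖K l x - K j x‖ ≤ ‖K l - K j‖ * ‖x‖ := by
      simpa using (K l - K j).le_opNorm x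
    calc ‖K l x - K j x‖ ≤ ‖K l - K j‖ * ‖x‖ := h1
      _ ≤ (ε / (2 * R')) * R' := by
          exact mul_le_mul hj.le hxR (norm_nonneg _) hr.le
      _ = ε / 2 := by field_simp
  have : dist (K l x) y < ε := by
    have h2 : dist (K j x) y < ε / 2 := Metric.mem_ball.1 hdy
    calc dist (K l x) y ≤ dist (K l x) (K j x) + dist (K j x) y := dist_triangle _ _ _
      _ ≤ ε / 2 + dist (K j x) y := by
          rw [dist_eq_norm]; exact add_le_add_left hdiff _
      _ < ε / 2 + ε / 2 := by linarith
      _ = ε := by ring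
  exact Set.mem_biUnion (Set.mem_biUnion hjt hy) (Metric.mem_ball.2 this)

/-- If `L : ℝ → L(H)` is a continuous family admitting a parametrix `T : ℝ → GL(H)`
with `T_λ L_λ = I + K_λ` for a continuous family `K` of compact operators, and
`C : ℝ × H → H` is a compact (completely continuous) map, then
`F(λ,x) = L_λ x + C(λ,x)` is proper on every closed bounded subset of `ℝ × H`. -/
theorem stmt_9 {H : Type*} [NormedAddCommGroup H] [InnerProductSpace ℝ H]
    [CompleteSpace H]
    (L T K : ℝ → H →L[ℝ] H)
    (hL : Continuous L) (hT : Continuous T)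
    (hTinv : ∀ l : ℝ, ∃ S : H →L[ℝ] H, T l ∘L S = 1 ∧ S ∘L T l = 1)
    (hK : Continuous K) (hKcpt : ∀ l : ℝ, IsCompactOperator (K l))
    (hparametrix : ∀ l : ℝ, T l ∘L L l = 1 + K l)
    (C : ℝ × H → H) (hCcont : Continuous C)
    (hCcpt : ∀ s : Set (ℝ × H), IsBounded s → IsCompact (closure (C '' s))) :
    ∀ S : Set (ℝ × H), IsClosed S → IsBounded S →
      ∀ A : Set H, IsCompact A →
        IsCompact ((fun p : ℝ × H => L p.1 p.2 + C p) ⁻¹' A ∩ S) := by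
  intro S hScl hSbd A hA
  obtain ⟨R, hSR⟩ := hSbd.subset_closedBall 0
  set I : Set ℝ := Metric.closedBall 0 R with hIdef
  have hI : IsCompact I := isCompact_closedBall 0 R
  have hSsub' : S ⊆ I ×ˢ Metric.closedBall (0 : H) R := by
    intro p hp
    have := hSR hp
    rw [← closedBall_prod_same] at this
    exact this
  set F : ℝ × H → H := fun p => L p.1 p.2 + C p with hF
  have hFcont : Continuous F :=
    ((hL.comp continuous_fst).clm_apply continuous_snd).add hCcont
  have hPcl : IsClosed (F ⁻¹' A ∩ S) :=
    (hA.isClosed.preimage hFcont).inter hScl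
  have hCC : IsCompact (closure (C '' S)) := hCcpt S hSbd
  have hKcl : IsCompact (closure ((fun p : ℝ × H => K p.1 p.2) ''
      (I ×ˢ Metric.closedBall 0 R))) :=
    TotallyBounded.isCompact_of_isClosed
      (aux_totB K hK hKcpt hI R).closure isClosed_closure
  have hTapp : Continuous fun q : ℝ × H => T q.1 q.2 :=
    (hT.comp continuous_fst).clm_apply continuous_snd
  have hTA : IsCompact ((fun q : ℝ × H => T q.1 q.2) '' (I ×ˢ A)) :=
    (hI.prod hA).image hTapp
  have hTC : IsCompact ((fun q : ℝ × H => T q.1 q.2) '' (I ×ˢ closure (C '' S))) :=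
    (hI.prod hCC).image hTapp
  set W : Set H := (fun q : ℝ × H => T q.1 q.2) '' (I ×ˢ A)
      + (-((fun q : ℝ × H => T q.1 q.2) '' (I ×ˢ closure (C '' S))))
      + (-(closure ((fun p : ℝ × H => K p.1 p.2) '' (I ×ˢ Metric.closedBall 0 R))))
    with hWdef
  have hW : IsCompact W := (hTA.add hTC.neg).add hKcl.neg
  have hQ : IsCompact (I ×ˢ W) := hI.prod hW
  refine hQ.of_isClosed_subset hPcl ?_
  rintro ⟨l, x⟩ ⟨hFx, hS⟩
  have hlI : l ∈ I := (hSsub' hS).1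
  have hxB : x ∈ Metric.closedBall (0 : H) R := (hSsub' hS).2
  refine ⟨hlI, ?_⟩
  have hxeq : x = T l (F (l, x)) + (-(T l (C (l, x)))) + (-(K l x)) := by
    have h1 := hparametrix l
    have h2 : T l (L l x) = x + K l x := by
      have := congrArg (fun M : H →L[ℝ] H => M x) h1
      simpa using this
    have h3 : T l (F (l, x)) = T l (L l x) + T l (C (l, x)) := by
      simp [hF, map_add]
    rw [h3, h2]
    abel
  rw [hxeq]
  exact Set.add_mem_add
    (Set.add_mem_add ⟨(l, F (l, x)), ⟨hlI, hFx⟩, rfl⟩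
      (Set.neg_mem_neg.2 ⟨(l, C (l, x)), ⟨hlI, subset_closure ⟨(l, x), hS, rfl⟩⟩, rfl⟩))
    (Set.neg_mem_neg.2 (subset_closure ⟨(l, x), ⟨hlI, hxB⟩, rfl⟩))
end
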